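/- Fix q \in (1/2, 1). Let X, Y be random vectors in R^d such that F_q(X) contains a ball of radius R_min/2, both F_q(X), F_q(Y) are contained in a ball of radius R_max + r centered at the origin, and \delta_q(X,Y) \le R_min/4. Then \|S(F_q(X)) - S(F_q(Y))\|_2 \le 6\sqrt{d} \cdot ((R_max + r)/R_min) \cdot \delta_q(X,Y), where S denotes the Steiner point. -/

import Mathlib

open MeasureTheory

/-- The CDF of a (law of a) real random variable. -/
noncomputable def rcdf (μ : Measure ℝ) (t : ℝ) : ℝ := (μ (Set.Iic t)).toReal

/-- The `q`-quantile `Q_q = inf {t : P(X ≤ t) ≥ q}`. -/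
noncomputable def quantile (μ : Measure ℝ) (q : ℝ) : ℝ := sInf {t | q ≤ rcdf μ t}

/-- The `q`-quantile of the marginal `⟨X, θ⟩` of a random vector with law `μ`. -/
noncomputable def dirQuantile {d : ℕ} (μ : Measure (EuclideanSpace ℝ (Fin d))) (q : ℝ)
    (θ : EuclideanSpace ℝ (Fin d)) : ℝ :=
  quantile (μ.map fun x => (inner ℝ x θ : ℝ)) q

/-- The `q`-floating body `F_q(X)`. -/
noncomputable def floatingBody {d : ℕ} (μ : Measure (EuclideanSpace ℝ (Fin d))) (q : ℝ) :
    Set (EuclideanSpace ℝ (Fin d)) :=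
  {x | ∀ θ : EuclideanSpace ℝ (Fin d), ‖θ‖ = 1 → (inner ℝ x θ : ℝ) ≤ dirQuantile μ q θ}

/-- The `q`-distance `δ_q(X,Y)`. -/
noncomputable def deltaQ {d : ℕ} (μ ν : Measure (EuclideanSpace ℝ (Fin d))) (q : ℝ) : ℝ :=
  ⨆ θ : Metric.sphere (0 : EuclideanSpace ℝ (Fin d)) 1,
    |dirQuantile μ q θ - dirQuantile ν q θ|

/-- The support function `h_K(θ) = max_{x ∈ K} ⟨x, θ⟩`. -/
noncomputable def suppFn {d : ℕ} (K : Set (EuclideanSpace ℝ (Fin d)))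
    (θ : EuclideanSpace ℝ (Fin d)) : ℝ :=
  sSup ((fun x => (inner ℝ x θ : ℝ)) '' K)

/-- The normalized uniform (Haar) measure on the unit sphere of `ℝ^d`. -/
noncomputable def sphereMeasure (d : ℕ) : Measure (EuclideanSpace ℝ (Fin d)) :=
  (μH[(d : ℝ) - 1] (Metric.sphere (0 : EuclideanSpace ℝ (Fin d)) 1))⁻¹ •
    (μH[(d : ℝ) - 1] : Measure (EuclideanSpace ℝ (Fin d))).restrict
      (Metric.sphere (0 : EuclideanSpace ℝ (Fin d)) 1)

/-- The Steiner point `S(K) = d ∫_{S^{d-1}} θ h_K(θ) dσ(θ)`. -/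
noncomputable def steinerPoint {d : ℕ} (K : Set (EuclideanSpace ℝ (Fin d))) :
    EuclideanSpace ℝ (Fin d) :=
  (d : ℝ) • ∫ θ, suppFn K θ • θ ∂(sphereMeasure d)

section Aux
variable {d : ℕ}
local notation "E" => EuclideanSpace ℝ (Fin d)

/-- Uniform bound on directional quantiles of a probability measure. -/
lemma dirQuantile_abs_le (μ : Measure E) [IsProbabilityMeasure μ]
    {q : ℝ} (hq0 : 0 < q) (hq1 : q < 1) :
    ∃ M : ℝ, ∀ θ : E, ‖θ‖ = 1 → |dirQuantile μ q θ| ≤ M := by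
  obtain ⟨R, hR0, hball_ge, hcompl⟩ : ∃ R : ℝ, 0 ≤ R ∧
      q ≤ (μ (Metric.closedBall 0 R)).toReal ∧
      (μ (Metric.closedBall (0:E) R)ᶜ).toReal < q := by
    have hmono : Monotone fun n : ℕ => Metric.closedBall (0:E) (n:ℝ) := fun m n h =>
      Metric.closedBall_subset_closedBall (by exact_mod_cast h)
    have hunion : ⋃ n : ℕ, Metric.closedBall (0:E) (n:ℝ) = Set.univ := by
      ext x
      simp only [Set.mem_iUnion, Set.mem_univ, iff_true, Metric.mem_closedBall,
        dist_zero_right]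
      obtain ⟨n, hn⟩ := exists_nat_ge ‖x‖
      exact ⟨n, hn⟩
    have h1 := tendsto_measure_iUnion_atTop (μ := μ) hmono
    rw [hunion, measure_univ] at h1
    have ht : Filter.Tendsto (fun n : ℕ => (μ (Metric.closedBall (0:E) (n:ℝ))).toReal)
        Filter.atTop (nhds 1) := by
      have h2 := (ENNReal.tendsto_toReal (a := 1) (by simp)).comp h1
      exact h2
    have hlt : max q (1 - q) < 1 := max_lt hq1 (by linarith)
    obtain ⟨n, hn⟩ := (ht.eventually (eventually_gt_nhds hlt)).exists
    refine ⟨n, Nat.cast_nonneg n, le_of_lt (lt_of_le_of_lt (le_max_left _ _) hn), ?_⟩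
    have hsum : (μ (Metric.closedBall (0:E) (n:ℝ))).toReal
        + (μ (Metric.closedBall (0:E) (n:ℝ))ᶜ).toReal = 1 := by
      have h3 := measure_add_measure_compl (μ := μ)
        (measurableSet_closedBall (x := (0:E)) (ε := (n:ℝ)))
      rw [measure_univ] at h3
      have h4 := congrArg ENNReal.toReal h3
      rw [ENNReal.toReal_add (measure_ne_top _ _) (measure_ne_top _ _)] at h4
      simpa using h4
    have h5 := lt_of_le_of_lt (le_max_right q (1-q)) hn
    linarith
  refine ⟨R, fun θ hθ => ?_⟩
  set f : E → ℝ := fun x => (inner ℝ x θ : ℝ) with hf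
  have hfm : Measurable f := (continuous_id.inner continuous_const).measurable
  have hrcdf : ∀ t, rcdf (μ.map f) t = (μ (f ⁻¹' Set.Iic t)).toReal := fun t => by
    rw [rcdf, Measure.map_apply hfm measurableSet_Iic]
  have hRmem : q ≤ rcdf (μ.map f) R := by
    rw [hrcdf]
    refine le_trans hball_ge (ENNReal.toReal_mono (measure_ne_top _ _) (measure_mono ?_))
    intro x hx
    simp only [Set.mem_preimage, Set.mem_Iic]
    have h1 : (inner ℝ x θ:ℝ) ≤ ‖x‖ * ‖θ‖ := real_inner_le_norm x θ
    have h2 : ‖x‖ ≤ R := mem_closedBall_zero_iff.mp hx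
    rw [hθ, mul_one] at h1
    exact h1.trans h2
  have hlb : ∀ t ∈ {t | q ≤ rcdf (μ.map f) t}, -R ≤ t := by
    intro t ht
    by_contra hlt
    push_neg at hlt
    have hsub : f ⁻¹' Set.Iic t ⊆ (Metric.closedBall (0:E) R)ᶜ := by
      intro x hx
      simp only [Set.mem_compl_iff, mem_closedBall_zero_iff, not_le]
      have h1 : |(inner ℝ x θ:ℝ)| ≤ ‖x‖ * ‖θ‖ := abs_real_inner_le_norm x θ
      rw [hθ, mul_one] at h1
      have h2 : (inner ℝ x θ:ℝ) ≤ t := hx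
      have h3 := neg_abs_le (inner ℝ x θ:ℝ)
      linarith
    have h6 : rcdf (μ.map f) t < q := by
      rw [hrcdf]
      exact lt_of_le_of_lt (ENNReal.toReal_mono (measure_ne_top _ _) (measure_mono hsub)) hcompl
    exact absurd ht (by simpa [Set.mem_setOf_eq] using not_le.mpr h6)
  have hne : {t | q ≤ rcdf (μ.map f) t}.Nonempty := ⟨R, hRmem⟩
  have h1 : dirQuantile μ q θ ≤ R := csInf_le ⟨-R, hlb⟩ hRmem
  have h2 : -R ≤ dirQuantile μ q θ := le_csInf hne hlb
  exact abs_le.mpr ⟨h2, h1⟩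

/-- Pointwise bound by `deltaQ`. -/
lemma abs_dirQuantile_sub_le (μ ν : Measure E) [IsProbabilityMeasure μ] [IsProbabilityMeasure ν]
    {q : ℝ} (hq0 : 0 < q) (hq1 : q < 1) {θ : E} (hθ : ‖θ‖ = 1) :
    |dirQuantile μ q θ - dirQuantile ν q θ| ≤ deltaQ μ ν q := by
  obtain ⟨M₁, hM₁⟩ := dirQuantile_abs_le μ hq0 hq1
  obtain ⟨M₂, hM₂⟩ := dirQuantile_abs_le ν hq0 hq1
  have hbdd : BddAbove (Set.range fun θ' : Metric.sphere (0:E) 1 =>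
      |dirQuantile μ q θ' - dirQuantile ν q θ'|) := by
    refine ⟨M₁ + M₂, ?_⟩
    rintro _ ⟨θ', rfl⟩
    have hθ' : ‖(θ' : E)‖ = 1 := mem_sphere_zero_iff_norm.mp θ'.2
    calc |dirQuantile μ q θ' - dirQuantile ν q θ'|
        ≤ |dirQuantile μ q θ'| + |dirQuantile ν q θ'| := abs_sub _ _
      _ ≤ M₁ + M₂ := add_le_add (hM₁ _ hθ') (hM₂ _ hθ')
  exact le_ciSup hbdd (⟨θ, mem_sphere_zero_iff_norm.mpr hθ⟩ : Metric.sphere (0:E) 1)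

/-- Scaling a point towards the center of an inscribed ball. -/
lemma approx_point {P : E → ℝ} {a x : E} {ρ δ : ℝ} (hρ : 0 < ρ) (hδ : 0 ≤ δ)
    (ha : ∀ θ : E, ‖θ‖ = 1 → (inner ℝ a θ : ℝ) + ρ ≤ P θ)
    (hx : ∀ θ : E, ‖θ‖ = 1 → (inner ℝ x θ : ℝ) ≤ P θ + δ) :
    ∃ y : E, (∀ θ : E, ‖θ‖ = 1 → (inner ℝ y θ : ℝ) ≤ P θ) ∧
      ‖x - y‖ ≤ (δ / (ρ + δ)) * ‖x - a‖ := by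
  have hρδ : 0 < ρ + δ := by linarith
  set t : ℝ := ρ / (ρ + δ) with htdef
  have ht0 : 0 < t := by positivity
  refine ⟨a + t • (x - a), ?_, ?_⟩
  · intro θ hθ
    have hinner : (inner ℝ (a + t • (x - a)) θ : ℝ)
        = (inner ℝ a θ : ℝ) + t * ((inner ℝ x θ : ℝ) - (inner ℝ a θ : ℝ)) := by
      rw [inner_add_left, real_inner_smul_left, inner_sub_left]
    rw [hinner]
    set s : ℝ := P θ - (inner ℝ a θ : ℝ) with hsdef
    have hs : ρ ≤ s := by have := ha θ hθ; rw [hsdef]; linarith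
    have h1 : t * ((inner ℝ x θ : ℝ) - (inner ℝ a θ : ℝ)) ≤ t * (s + δ) :=
      mul_le_mul_of_nonneg_left (by have := hx θ hθ; rw [hsdef]; linarith) ht0.le
    have h2 : t * (s + δ) ≤ s := by
      rw [htdef, div_mul_eq_mul_div, div_le_iff₀ hρδ]
      nlinarith
    linarith
  · have hxy : x - (a + t • (x - a)) = (1 - t) • (x - a) := by
      rw [sub_smul, one_smul]
      abel
    rw [hxy, norm_smul, Real.norm_eq_abs]
    have h1t : 1 - t = δ / (ρ + δ) := by rw [htdef]; field_simp; ring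
    rw [h1t, abs_of_nonneg (by positivity)]

lemma suppFn_bddAbove {K : Set E} {R : ℝ} (hK : K ⊆ Metric.closedBall 0 R) (θ : E) :
    BddAbove ((fun x => (inner ℝ x θ : ℝ)) '' K) := by
  refine ⟨R * ‖θ‖, ?_⟩
  rintro _ ⟨x, hx, rfl⟩
  have h1 : (inner ℝ x θ : ℝ) ≤ ‖x‖ * ‖θ‖ := real_inner_le_norm x θ
  have h2 : ‖x‖ ≤ R := mem_closedBall_zero_iff.mp (hK hx)
  exact h1.trans (mul_le_mul_of_nonneg_right h2 (norm_nonneg θ))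

lemma le_suppFn {K : Set E} {R : ℝ} (hK : K ⊆ Metric.closedBall 0 R) {x : E} (hx : x ∈ K)
    (θ : E) : (inner ℝ x θ : ℝ) ≤ suppFn K θ :=
  le_csSup (suppFn_bddAbove hK θ) ⟨x, hx, rfl⟩

lemma suppFn_le {K : Set E} (hne : K.Nonempty) {θ : E} {b : ℝ}
    (hb : ∀ x ∈ K, (inner ℝ x θ : ℝ) ≤ b) : suppFn K θ ≤ b := by
  refine csSup_le (hne.image _) ?_
  rintro _ ⟨x, hx, rfl⟩
  exact hb x hx

lemma abs_suppFn_le {K : Set E} {R : ℝ} (hK : K ⊆ Metric.closedBall 0 R) (hne : K.Nonempty)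
    {θ : E} (hθ : ‖θ‖ = 1) : |suppFn K θ| ≤ R := by
  obtain ⟨x₀, hx₀⟩ := hne
  refine abs_le.mpr ⟨?_, ?_⟩
  · refine le_trans ?_ (le_suppFn hK hx₀ θ)
    have h1 : |(inner ℝ x₀ θ : ℝ)| ≤ ‖x₀‖ * ‖θ‖ := abs_real_inner_le_norm x₀ θ
    rw [hθ, mul_one] at h1
    have h2 : ‖x₀‖ ≤ R := mem_closedBall_zero_iff.mp (hK hx₀)
    have := neg_abs_le (inner ℝ x₀ θ : ℝ)
    linarith
  · refine suppFn_le ⟨x₀, hx₀⟩ fun x hx => ?_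
    have h1 : (inner ℝ x θ : ℝ) ≤ ‖x‖ * ‖θ‖ := real_inner_le_norm x θ
    rw [hθ, mul_one] at h1
    exact h1.trans (mem_closedBall_zero_iff.mp (hK hx))

lemma suppFn_continuous {K : Set E} {R : ℝ} (hK : K ⊆ Metric.closedBall 0 R)
    (hne : K.Nonempty) : Continuous (suppFn K) := by
  obtain ⟨x₀, hx₀⟩ := hne
  have hR0 : 0 ≤ R := le_trans (norm_nonneg x₀) (mem_closedBall_zero_iff.mp (hK hx₀))
  have key : ∀ θ₁ θ₂ : E, suppFn K θ₁ ≤ suppFn K θ₂ + R * ‖θ₁ - θ₂‖ := by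
    intro θ₁ θ₂
    refine suppFn_le ⟨x₀, hx₀⟩ fun x hx => ?_
    have h1 : (inner ℝ x θ₁ : ℝ) = (inner ℝ x θ₂ : ℝ) + (inner ℝ x (θ₁ - θ₂) : ℝ) := by
      rw [← inner_add_right]
      congr 1
      abel
    have h2 : (inner ℝ x (θ₁ - θ₂) : ℝ) ≤ ‖x‖ * ‖θ₁ - θ₂‖ := real_inner_le_norm _ _
    have h3 : ‖x‖ ≤ R := mem_closedBall_zero_iff.mp (hK hx)
    have h4 := le_suppFn hK hx θ₂
    have h5 : ‖x‖ * ‖θ₁ - θ₂‖ ≤ R * ‖θ₁ - θ₂‖ :=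
      mul_le_mul_of_nonneg_right h3 (norm_nonneg _)
    linarith
  have hlip : LipschitzWith (Real.toNNReal R) (suppFn K) := by
    refine LipschitzWith.of_dist_le_mul fun θ₁ θ₂ => ?_
    rw [Real.dist_eq, Real.coe_toNNReal R hR0, dist_eq_norm]
    refine abs_sub_le_iff.mpr ⟨by linarith [key θ₁ θ₂], ?_⟩
    have := key θ₂ θ₁
    rw [show θ₂ - θ₁ = -(θ₁ - θ₂) by abel, norm_neg] at this
    linarith
  exact hlip.continuous

/-- One-sided comparison of support functions of two "floating-body-like" sets. -/
lemma suppFn_le_suppFn_add {K₁ K₂ : Set E} {P : E → ℝ} {a : E} {ρ δ R : ℝ}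
    (hρ : 0 < ρ) (hδ : 0 ≤ δ)
    (hK₁ : ∀ y : E, (∀ θ : E, ‖θ‖ = 1 → (inner ℝ y θ : ℝ) ≤ P θ) → y ∈ K₁)
    (ha : ∀ θ : E, ‖θ‖ = 1 → (inner ℝ a θ : ℝ) + ρ ≤ P θ)
    (hx : ∀ x ∈ K₂, ∀ θ : E, ‖θ‖ = 1 → (inner ℝ x θ : ℝ) ≤ P θ + δ)
    (hK₁b : K₁ ⊆ Metric.closedBall 0 R) (hK₂b : K₂ ⊆ Metric.closedBall 0 R)
    (hK₂ne : K₂.Nonempty) (haR : ‖a‖ ≤ R)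
    {θ₀ : E} (hθ₀ : ‖θ₀‖ = 1) :
    suppFn K₂ θ₀ ≤ suppFn K₁ θ₀ + δ / (ρ + δ) * (2 * R) := by
  refine suppFn_le hK₂ne fun x hxm => ?_
  obtain ⟨y, hy, hxy⟩ := approx_point hρ hδ ha (hx x hxm)
  have hyK : y ∈ K₁ := hK₁ y hy
  have h1 : (inner ℝ x θ₀ : ℝ) = (inner ℝ y θ₀ : ℝ) + (inner ℝ (x - y) θ₀ : ℝ) := by
    rw [← inner_add_left]
    congr 1
    abel
  have h2 : (inner ℝ (x - y) θ₀ : ℝ) ≤ ‖x - y‖ * ‖θ₀‖ := real_inner_le_norm _ _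
  rw [hθ₀, mul_one] at h2
  have h3 := le_suppFn hK₁b hyK θ₀
  have h4 : ‖x - a‖ ≤ 2 * R := by
    have h5 := mem_closedBall_zero_iff.mp (hK₂b hxm)
    calc ‖x - a‖ ≤ ‖x‖ + ‖a‖ := norm_sub_le _ _
      _ ≤ 2 * R := by linarith
  have h6 : ‖x - y‖ ≤ δ / (ρ + δ) * (2 * R) :=
    hxy.trans (mul_le_mul_of_nonneg_left h4 (by positivity))
  linarith

lemma sphereMeasure_ae : ∀ᵐ θ ∂(sphereMeasure d), ‖θ‖ = 1 := by
  rw [ae_iff]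
  have h1 : {θ : E | ¬ ‖θ‖ = 1} = (Metric.sphere (0:E) 1)ᶜ := by
    ext θ; simp [mem_sphere_zero_iff_norm]
  rw [h1, sphereMeasure, Measure.smul_apply,
    Measure.restrict_apply (Metric.isClosed_sphere.measurableSet.compl), Set.compl_inter_self]
  simp

lemma sphereMeasure_map (e : E ≃ₗᵢ[ℝ] E) : (sphereMeasure d).map e = sphereMeasure d := by
  rw [sphereMeasure, Measure.map_smul]
  congr 1
  ext A hA
  have hpre : (⇑e) ⁻¹' (Metric.sphere (0:E) 1) = (Metric.sphere (0:E) 1) := by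
    ext x
    simp [mem_sphere_zero_iff_norm, e.norm_map]
  rw [Measure.map_apply e.continuous.measurable hA,
    Measure.restrict_apply hA, Measure.restrict_apply (e.continuous.measurable hA),
    show (⇑e) ⁻¹' A ∩ (Metric.sphere (0:E) 1) = (⇑e) ⁻¹' (A ∩ (Metric.sphere (0:E) 1)) by
      rw [Set.preimage_inter, hpre]]
  rw [e.isometry.hausdorffMeasure_preimage (Or.inr e.surjective),
    Set.inter_eq_self_of_subset_left (by rw [e.surjective.range_eq]; exact Set.subset_univ _)]

lemma integrable_of_cont_bdd (hp : IsProbabilityMeasure (sphereMeasure d)) {g : E → ℝ}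
    (hg : Continuous g) {C : ℝ} (hC : ∀ θ : E, ‖θ‖ = 1 → |g θ| ≤ C) :
    Integrable g (sphereMeasure d) := by
  haveI := hp
  exact ⟨hg.aestronglyMeasurable,
    HasFiniteIntegral.of_bounded (C := C) (sphereMeasure_ae.mono fun θ hθ => by
      simpa [Real.norm_eq_abs] using hC θ hθ)⟩

/-- Second moment of a coordinate of the uniform measure on the sphere. -/
lemma sphere_moment (hd : 1 ≤ d) (hp : IsProbabilityMeasure (sphereMeasure d))
    {u : E} (hu : ‖u‖ = 1) :
    ∫ θ, (inner ℝ u θ : ℝ)^2 ∂(sphereMeasure d) = 1 / d := by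
  haveI := hp
  have hcont : ∀ v : E, Continuous fun θ : E => (inner ℝ v θ : ℝ)^2 := fun v =>
    (continuous_const.inner continuous_id).pow 2
  have hint : ∀ v : E, ‖v‖ = 1 → Integrable (fun θ : E => (inner ℝ v θ : ℝ)^2)
      (sphereMeasure d) := by
    intro v hv
    refine integrable_of_cont_bdd hp (hcont v) (C := 1) fun θ hθ => ?_
    have h1 : |(inner ℝ v θ : ℝ)| ≤ ‖v‖ * ‖θ‖ := abs_real_inner_le_norm v θ
    rw [hv, hθ, mul_one] at h1
    rw [abs_of_nonneg (sq_nonneg _)]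
    calc (inner ℝ v θ : ℝ)^2 = |(inner ℝ v θ : ℝ)|^2 := (sq_abs _).symm
      _ ≤ 1 := by nlinarith [abs_nonneg (inner ℝ v θ : ℝ)]
  have hinv : ∀ v w : E, ‖v‖ = 1 → ‖w‖ = 1 →
      ∫ θ, (inner ℝ v θ : ℝ)^2 ∂(sphereMeasure d)
        = ∫ θ, (inner ℝ w θ : ℝ)^2 ∂(sphereMeasure d) := by
    intro v w hv hw
    rcases eq_or_ne w v with rfl | hne
    · rfl
    set e : E ≃ₗᵢ[ℝ] E := Submodule.reflection (ℝ ∙ (w - v))ᗮ with hedef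
    have hew : e w = v := Submodule.reflection_sub (by rw [hw, hv])
    calc ∫ θ, (inner ℝ v θ : ℝ)^2 ∂(sphereMeasure d)
        = ∫ θ, (inner ℝ v θ : ℝ)^2 ∂((sphereMeasure d).map e) := by rw [sphereMeasure_map]
      _ = ∫ θ, (inner ℝ v (e θ) : ℝ)^2 ∂(sphereMeasure d) :=
          integral_map e.continuous.measurable.aemeasurable (hcont v).aestronglyMeasurable
      _ = ∫ θ, (inner ℝ w θ : ℝ)^2 ∂(sphereMeasure d) := by
          congr 1
          funext θ
          rw [← hew, e.inner_map_map]
  have hbasis : ∀ i : Fin d, ‖(EuclideanSpace.single i (1:ℝ) : E)‖ = 1 := by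
    intro i
    rw [EuclideanSpace.norm_single]
    norm_num
  have hsum : ∑ i : Fin d, ∫ θ, (inner ℝ (EuclideanSpace.single i (1:ℝ) : E) θ : ℝ)^2
      ∂(sphereMeasure d) = 1 := by
    rw [← integral_finset_sum _ (fun i _ => hint _ (hbasis i))]
    have hae : ∀ᵐ θ ∂(sphereMeasure d),
        ∑ i : Fin d, (inner ℝ (EuclideanSpace.single i (1:ℝ) : E) θ : ℝ)^2 = 1 := by
      refine sphereMeasure_ae.mono fun θ hθ => ?_
      have h1 : ∀ i : Fin d, (inner ℝ (EuclideanSpace.single i (1:ℝ) : E) θ : ℝ) = θ i := by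
        intro i
        rw [real_inner_comm, EuclideanSpace.inner_single_right]
        simp
      simp_rw [h1]
      have h2 : (inner ℝ θ θ : ℝ) = ∑ i : Fin d, θ i * θ i := PiLp.inner_apply θ θ
      have h3 : (inner ℝ θ θ : ℝ) = ‖θ‖ ^ 2 := real_inner_self_eq_norm_sq θ
      rw [hθ] at h3
      simp_rw [pow_two]
      rw [← h2, h3]
      norm_num
    rw [integral_congr_ae hae]
    simp
  have heach : ∀ i : Fin d, ∫ θ, (inner ℝ (EuclideanSpace.single i (1:ℝ) : E) θ : ℝ)^2
      ∂(sphereMeasure d) = ∫ θ, (inner ℝ u θ : ℝ)^2 ∂(sphereMeasure d) := fun i =>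
    hinv _ _ (hbasis i) hu
  rw [Finset.sum_congr rfl (fun i _ => heach i), Finset.sum_const, Finset.card_univ,
    Fintype.card_fin, nsmul_eq_mul] at hsum
  have hd0 : (0:ℝ) < d := by exact_mod_cast hd
  field_simp at hsum ⊢
  linarith

/-- Cauchy–Schwarz for the first absolute moment. -/
lemma integral_abs_le_sqrt (hp : IsProbabilityMeasure (sphereMeasure d)) {g : E → ℝ}
    (hg : Continuous g) {C : ℝ} (hC : ∀ θ : E, ‖θ‖ = 1 → |g θ| ≤ C) :
    ∫ θ, |g θ| ∂(sphereMeasure d)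
      ≤ Real.sqrt (∫ θ, (g θ)^2 ∂(sphereMeasure d)) := by
  haveI := hp
  set m := ∫ θ, |g θ| ∂(sphereMeasure d) with hm
  have hg1 : Integrable (fun θ : E => |g θ|) (sphereMeasure d) :=
    integrable_of_cont_bdd hp hg.abs (C := C) fun θ hθ => by
      rw [abs_abs]; exact hC θ hθ
  have hg2 : Integrable (fun θ : E => (g θ)^2) (sphereMeasure d) :=
    integrable_of_cont_bdd hp (hg.pow 2) (C := C^2) fun θ hθ => by
      rw [abs_of_nonneg (sq_nonneg _), ← sq_abs]
      nlinarith [hC θ hθ, abs_nonneg (g θ)]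
  have hm0 : 0 ≤ m := integral_nonneg fun θ => abs_nonneg _
  have hexp : 0 ≤ ∫ θ, ((|g θ| - m)^2) ∂(sphereMeasure d) :=
    integral_nonneg fun θ => sq_nonneg _
  have hrw : (fun θ : E => (|g θ| - m)^2)
      = fun θ : E => ((g θ)^2 - (2*m) * |g θ|) + m^2 := by
    funext θ
    linear_combination sq_abs (g θ)
  have hIa : Integrable (fun θ : E => (g θ)^2 - (2*m) * |g θ|) (sphereMeasure d) :=
    hg2.sub (hg1.const_mul (2*m))
  rw [hrw, integral_add hIa (integrable_const _),
    integral_sub hg2 (hg1.const_mul (2*m)), integral_const_mul, integral_const] at hexp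
  simp only [probReal_univ, measure_univ, ENNReal.toReal_one, smul_eq_mul, one_mul] at hexp
  have hm2 : m^2 ≤ ∫ θ, (g θ)^2 ∂(sphereMeasure d) := by nlinarith [hexp]
  calc m = Real.sqrt (m^2) := (Real.sqrt_sq hm0).symm
    _ ≤ _ := Real.sqrt_le_sqrt hm2

end Aux

set_option maxHeartbeats 1000000 in
/-- Approximate Lipschitzness of the Steiner point of the floating body:
`‖S(F_q(X)) - S(F_q(Y))‖ ≤ 6 √d ((R_max + r)/R_min) ⋅ δ_q(X,Y)` under the stated conditions. -/
theorem stmt_15 {d : ℕ} (q Rmin Rmax r : ℝ) (hq : q ∈ Set.Ioo (1 / 2 : ℝ) 1)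
    (hRmin : 0 < Rmin) (hRmax : 0 < Rmax) (hr : 0 < r)
    (μ ν : Measure (EuclideanSpace ℝ (Fin d))) [IsProbabilityMeasure μ] [IsProbabilityMeasure ν]
    (hball : ∃ a, Metric.closedBall a (Rmin / 2) ⊆ floatingBody μ q)
    (hcontX : floatingBody μ q ⊆ Metric.closedBall 0 (Rmax + r))
    (hcontY : floatingBody ν q ⊆ Metric.closedBall 0 (Rmax + r))
    (hδ : deltaQ μ ν q ≤ Rmin / 4) :
    ‖steinerPoint (floatingBody μ q) - steinerPoint (floatingBody ν q)‖ ≤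
      6 * Real.sqrt d * ((Rmax + r) / Rmin) * deltaQ μ ν q := by
  obtain ⟨hq2, hq1⟩ := hq
  have hq0 : (0:ℝ) < q := by linarith
  have hδ0 : 0 ≤ deltaQ μ ν q := Real.iSup_nonneg fun _ => abs_nonneg _
  have hRr : (0:ℝ) < Rmax + r := by linarith
  have hRHS0 : 0 ≤ 6 * Real.sqrt d * ((Rmax + r) / Rmin) * deltaQ μ ν q := by positivity
  rcases Nat.eq_zero_or_pos d with hd0 | hdpos
  · subst hd0
    haveI : Subsingleton (EuclideanSpace ℝ (Fin 0)) := ⟨fun a b => PiLp.ext fun i => i.elim0⟩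
    rw [Subsingleton.elim (steinerPoint (floatingBody μ q)) (steinerPoint (floatingBody ν q)),
      sub_self, norm_zero]
    exact hRHS0
  have hd1 : 1 ≤ d := hdpos
  -- degenerate sphere measure cases
  have htri : sphereMeasure d = 0 ∨ IsProbabilityMeasure (sphereMeasure d) := by
    rcases eq_or_ne (μH[(d:ℝ)-1] (Metric.sphere (0:EuclideanSpace ℝ (Fin d)) 1)) 0 with h0 | h0
    · left
      rw [sphereMeasure, Measure.restrict_eq_zero.mpr h0, smul_zero]
    rcases eq_or_ne (μH[(d:ℝ)-1] (Metric.sphere (0:EuclideanSpace ℝ (Fin d)) 1)) ⊤ with ht | ht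
    · left
      rw [sphereMeasure, ht, ENNReal.inv_top, zero_smul]
    · right
      constructor
      rw [sphereMeasure, Measure.smul_apply,
        Measure.restrict_apply MeasurableSet.univ, Set.univ_inter, smul_eq_mul,
        ENNReal.inv_mul_cancel h0 ht]
  rcases htri with hzero | hp
  · have hS : ∀ K : Set (EuclideanSpace ℝ (Fin d)), steinerPoint K = 0 := by
      intro K
      rw [steinerPoint, hzero, integral_zero_measure, smul_zero]
    rw [hS, hS, sub_self, norm_zero]
    exact hRHS0
  haveI := hp
  -- setup
  obtain ⟨a, hball⟩ := hball
  set K := floatingBody μ q with hKdef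
  set L := floatingBody ν q with hLdef
  set δq := deltaQ μ ν q with hδqdef
  have haK : a ∈ K := hball (Metric.mem_closedBall_self (by linarith))
  have hQa : ∀ θ : EuclideanSpace ℝ (Fin d), ‖θ‖ = 1 →
      (inner ℝ a θ : ℝ) + Rmin / 2 ≤ dirQuantile μ q θ := by
    intro θ hθ
    have hmem : a + (Rmin / 2) • θ ∈ Metric.closedBall a (Rmin / 2) := by
      rw [Metric.mem_closedBall, dist_eq_norm, add_sub_cancel_left, norm_smul,
        Real.norm_eq_abs, hθ, mul_one, abs_of_nonneg (by linarith)]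
    have h1 : (inner ℝ (a + (Rmin / 2) • θ) θ : ℝ) ≤ dirQuantile μ q θ := hball hmem θ hθ
    rw [inner_add_left, real_inner_smul_left, real_inner_self_eq_norm_mul_norm, hθ] at h1
    linarith
  have hcmp : ∀ θ : EuclideanSpace ℝ (Fin d), ‖θ‖ = 1 →
      |dirQuantile μ q θ - dirQuantile ν q θ| ≤ δq := fun θ hθ =>
    abs_dirQuantile_sub_le μ ν hq0 hq1 hθ
  have haL : a ∈ L := by
    intro θ hθ
    have h1 := hQa θ hθ
    have h2 := (abs_le.mp (hcmp θ hθ)).2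
    linarith
  have hKne : K.Nonempty := ⟨a, haK⟩
  have hLne : L.Nonempty := ⟨a, haL⟩
  have haR : ‖a‖ ≤ Rmax + r := mem_closedBall_zero_iff.mp (hcontX haK)
  set ε : ℝ := δq / (Rmin / 2) * (2 * (Rmax + r)) with hεdef
  -- support function comparison
  have hsupp1 : ∀ θ₀ : EuclideanSpace ℝ (Fin d), ‖θ₀‖ = 1 →
      suppFn L θ₀ ≤ suppFn K θ₀ + ε := by
    intro θ₀ hθ₀
    have h1 := suppFn_le_suppFn_add (K₁ := K) (K₂ := L) (P := dirQuantile μ q) (a := a)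
      (ρ := Rmin / 2) (δ := δq) (R := Rmax + r) (by linarith) hδ0
      (fun y hy => hy) hQa
      (fun x hxm θ hθ => by
        have h2 := hxm θ hθ
        have h3 := (abs_le.mp (hcmp θ hθ)).1
        linarith)
      hcontX hcontY hLne haR hθ₀
    have h4 : δq / (Rmin / 2 + δq) * (2 * (Rmax + r)) ≤ ε := by
      rw [hεdef]
      have h5 : δq / (Rmin / 2 + δq) ≤ δq / (Rmin / 2) := by
        rcases eq_or_lt_of_le hδ0 with h6 | h6
        · rw [← h6]; simp
        · rw [div_le_div_iff₀ (by linarith) (by linarith)]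
          nlinarith
      exact mul_le_mul_of_nonneg_right h5 (by linarith)
    linarith
  have hsupp2 : ∀ θ₀ : EuclideanSpace ℝ (Fin d), ‖θ₀‖ = 1 →
      suppFn K θ₀ ≤ suppFn L θ₀ + ε := by
    intro θ₀ hθ₀
    have h1 := suppFn_le_suppFn_add (K₁ := L) (K₂ := K) (P := dirQuantile ν q) (a := a)
      (ρ := Rmin / 2 - δq) (δ := δq) (R := Rmax + r) (by linarith) hδ0
      (fun y hy => hy)
      (fun θ hθ => by
        have h2 := hQa θ hθ
        have h3 := (abs_le.mp (hcmp θ hθ)).2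
        linarith)
      (fun x hxm θ hθ => by
        have h2 := hxm θ hθ
        have h3 := (abs_le.mp (hcmp θ hθ)).2
        linarith)
      hcontY hcontX hKne haR hθ₀
    have h4 : Rmin / 2 - δq + δq = Rmin / 2 := by ring
    rw [h4] at h1
    exact h1
  have hsupp : ∀ θ : EuclideanSpace ℝ (Fin d), ‖θ‖ = 1 →
      |suppFn K θ - suppFn L θ| ≤ ε := by
    intro θ hθ
    exact abs_sub_le_iff.mpr ⟨by linarith [hsupp2 θ hθ], by linarith [hsupp1 θ hθ]⟩
  have hε0 : 0 ≤ ε := by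
    rw [hεdef]
    positivity
  -- integrability
  have hKcont : Continuous (suppFn K) := suppFn_continuous hcontX hKne
  have hLcont : Continuous (suppFn L) := suppFn_continuous hcontY hLne
  have hintK : Integrable (fun θ => suppFn K θ • θ) (sphereMeasure d) :=
    ⟨(hKcont.smul continuous_id).aestronglyMeasurable,
     HasFiniteIntegral.of_bounded (C := Rmax + r) (sphereMeasure_ae.mono fun θ hθ => by
       rw [norm_smul, hθ, mul_one, Real.norm_eq_abs]
       exact abs_suppFn_le hcontX hKne hθ)⟩
  have hintL : Integrable (fun θ => suppFn L θ • θ) (sphereMeasure d) :=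
    ⟨(hLcont.smul continuous_id).aestronglyMeasurable,
     HasFiniteIntegral.of_bounded (C := Rmax + r) (sphereMeasure_ae.mono fun θ hθ => by
       rw [norm_smul, hθ, mul_one, Real.norm_eq_abs]
       exact abs_suppFn_le hcontY hLne hθ)⟩
  have hFeq : (fun θ : EuclideanSpace ℝ (Fin d) => (suppFn K θ - suppFn L θ) • θ)
      = fun θ => suppFn K θ • θ - suppFn L θ • θ := funext fun θ => sub_smul _ _ _
  have hintF : Integrable (fun θ : EuclideanSpace ℝ (Fin d) =>
      (suppFn K θ - suppFn L θ) • θ) (sphereMeasure d) := by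
    rw [hFeq]
    exact hintK.sub hintL
  have hdiff : steinerPoint K - steinerPoint L
      = (d : ℝ) • ∫ θ, (suppFn K θ - suppFn L θ) • θ ∂(sphereMeasure d) := by
    rw [steinerPoint, steinerPoint, ← smul_sub, ← integral_sub hintK hintL, hFeq]
  set w := steinerPoint K - steinerPoint L with hwdef
  rcases eq_or_ne w 0 with hw0 | hw0
  · rw [hw0, norm_zero]
    exact hRHS0
  set u : EuclideanSpace ℝ (Fin d) := ‖w‖⁻¹ • w with hudef
  have hu : ‖u‖ = 1 := norm_smul_inv_norm hw0
  have hwpos : (0:ℝ) < ‖w‖ := norm_pos_iff.mpr hw0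
  have hwu : (inner ℝ u w : ℝ) = ‖w‖ := by
    rw [hudef, real_inner_smul_left, real_inner_self_eq_norm_mul_norm]
    field_simp
  -- the key integral identity
  have hmain : (inner ℝ u w : ℝ)
      = (d : ℝ) * ∫ θ, (suppFn K θ - suppFn L θ) * (inner ℝ u θ : ℝ) ∂(sphereMeasure d) := by
    rw [hdiff, real_inner_smul_right]
    congr 1
    rw [← integral_inner hintF u]
    congr 1
    funext θ
    rw [real_inner_smul_right]
  -- bounding the integral
  have hginn : Continuous fun θ : EuclideanSpace ℝ (Fin d) => (inner ℝ u θ : ℝ) :=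
    continuous_const.inner continuous_id
  have habs_inn : ∀ θ : EuclideanSpace ℝ (Fin d), ‖θ‖ = 1 → |(inner ℝ u θ : ℝ)| ≤ 1 := by
    intro θ hθ
    have h1 : |(inner ℝ u θ : ℝ)| ≤ ‖u‖ * ‖θ‖ := abs_real_inner_le_norm u θ
    rwa [hu, hθ, mul_one] at h1
  have hint1 : Integrable (fun θ : EuclideanSpace ℝ (Fin d) =>
      (suppFn K θ - suppFn L θ) * (inner ℝ u θ : ℝ)) (sphereMeasure d) := by
    refine integrable_of_cont_bdd hp ((hKcont.sub hLcont).mul hginn)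
      (C := 2 * (Rmax + r)) fun θ hθ => ?_
    rw [abs_mul]
    have h1 : |suppFn K θ - suppFn L θ| ≤ 2 * (Rmax + r) := by
      calc |suppFn K θ - suppFn L θ| ≤ |suppFn K θ| + |suppFn L θ| := abs_sub _ _
        _ ≤ 2 * (Rmax + r) := by
            linarith [abs_suppFn_le hcontX hKne hθ, abs_suppFn_le hcontY hLne hθ]
    calc |suppFn K θ - suppFn L θ| * |(inner ℝ u θ : ℝ)|
        ≤ (2 * (Rmax + r)) * 1 :=
          mul_le_mul h1 (habs_inn θ hθ) (abs_nonneg _) (by linarith)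
      _ = 2 * (Rmax + r) := mul_one _
  have hint2 : Integrable (fun θ : EuclideanSpace ℝ (Fin d) => |(inner ℝ u θ : ℝ)|)
      (sphereMeasure d) :=
    integrable_of_cont_bdd hp hginn.abs (C := 1) fun θ hθ => by
      rw [abs_abs]; exact habs_inn θ hθ
  have hmono : ∫ θ, (suppFn K θ - suppFn L θ) * (inner ℝ u θ : ℝ) ∂(sphereMeasure d)
      ≤ ∫ θ, ε * |(inner ℝ u θ : ℝ)| ∂(sphereMeasure d) := by
    refine integral_mono_ae hint1 (hint2.const_mul ε) ?_
    refine sphereMeasure_ae.mono fun θ hθ => ?_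
    calc (suppFn K θ - suppFn L θ) * (inner ℝ u θ : ℝ)
        ≤ |(suppFn K θ - suppFn L θ) * (inner ℝ u θ : ℝ)| := le_abs_self _
      _ = |suppFn K θ - suppFn L θ| * |(inner ℝ u θ : ℝ)| := abs_mul _ _
      _ ≤ ε * |(inner ℝ u θ : ℝ)| :=
          mul_le_mul_of_nonneg_right (hsupp θ hθ) (abs_nonneg _)
  have hCS : ∫ θ, |(inner ℝ u θ : ℝ)| ∂(sphereMeasure d) ≤ Real.sqrt (1 / d) := by
    have h1 := integral_abs_le_sqrt hp hginn (C := 1) habs_inn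
    rwa [show (∫ θ, (inner ℝ u θ : ℝ)^2 ∂(sphereMeasure d)) = 1 / d from
      sphere_moment hd1 hp hu] at h1
  -- put it together
  have hd0' : (0:ℝ) < d := by exact_mod_cast hd1
  have hsd : Real.sqrt d * Real.sqrt d = (d:ℝ) := Real.mul_self_sqrt hd0'.le
  have hsd0 : (0:ℝ) < Real.sqrt d := Real.sqrt_pos.mpr hd0'
  have hfinal : ‖w‖ ≤ (d:ℝ) * (ε * Real.sqrt (1 / d)) := by
    rw [← hwu, hmain]
    refine mul_le_mul_of_nonneg_left ?_ hd0'.le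
    calc ∫ θ, (suppFn K θ - suppFn L θ) * (inner ℝ u θ : ℝ) ∂(sphereMeasure d)
        ≤ ∫ θ, ε * |(inner ℝ u θ : ℝ)| ∂(sphereMeasure d) := hmono
      _ = ε * ∫ θ, |(inner ℝ u θ : ℝ)| ∂(sphereMeasure d) := integral_const_mul _ _
      _ ≤ ε * Real.sqrt (1 / d) := mul_le_mul_of_nonneg_left hCS hε0
  have hsqrt1d : Real.sqrt (1 / d) = (Real.sqrt d)⁻¹ := by
    rw [one_div, Real.sqrt_inv]
  have hdinv : (d:ℝ) * (Real.sqrt d)⁻¹ = Real.sqrt d := by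
    rw [inv_eq_one_div, mul_one_div, div_eq_iff hsd0.ne']
    exact hsd.symm
  have heq : (d:ℝ) * (ε * Real.sqrt (1 / d)) = Real.sqrt d * ε := by
    rw [hsqrt1d,
      show (d:ℝ) * (ε * (Real.sqrt d)⁻¹) = ((d:ℝ) * (Real.sqrt d)⁻¹) * ε from by ring, hdinv]
  rw [heq] at hfinal
  refine hfinal.trans ?_
  have hεval : ε = 4 * (Rmax + r) / Rmin * δq := by
    rw [hεdef]
    field_simp
    ring
  rw [hεval]
  have hA : 0 ≤ (Rmax + r) / Rmin := by positivity
  have h6 : Real.sqrt d * (4 * (Rmax + r) / Rmin * δq)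
      = 4 * Real.sqrt d * ((Rmax + r) / Rmin) * δq := by ring
  rw [h6]
  nlinarith [mul_nonneg (mul_nonneg hsd0.le hA) hδ0]
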